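/- Let f be any function mapping a finite graph G to a vertex labeling f(G) : V(G) → D such that f(G)(v) = f(G)(w) whenever v and w lie in the same orbit of the automorphism group of G. Then there exist vertex-colored graphs A = (V_A, E_A, ℓ_A) and B = (V_B, E_B, ℓ_B) that are non-isomorphic as colored graphs, such that the augmented colored graphs A' and B', obtained by replacing each node color ℓ(v) with the pair (ℓ(v), f(V,E)(v)), are not distinguished by the 1-WL (color refinement) algorithm. -/

import Mathlib

/-- The multiset of colors (under coloring `c`) of the neighbors of `v` in `G`. -/
noncomputable def nbrColors {V : Type*} [Fintype V] (G : SimpleGraph V) (c : V → ℕ) (v : V) :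
    Multiset ℕ :=
  letI := Classical.decRel G.Adj
  (G.neighborFinset v).val.map c

/-- `C` is a run of color refinement (1-WL) on `G`: since colors are produced by an
injective `RELABEL` of the pair (old color, multiset of neighbors' old colors), two
vertices get equal new colors iff their pairs agree. -/
def IsCR {V : Type*} [Fintype V] (G : SimpleGraph V) (C : ℕ → V → ℕ) : Prop :=
  ∀ t v w, C (t + 1) v = C (t + 1) w ↔
    (C t v = C t w ∧ nbrColors G (C t) v = nbrColors G (C t) w)

/-- `CG`, `CH` is a parallel run of color refinement on `G` and `H`, with the injective
`RELABEL` applied consistently across both graphs. -/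
def IsParallelCR {V W : Type*} [Fintype V] [Fintype W] (G : SimpleGraph V) (H : SimpleGraph W)
    (CG : ℕ → V → ℕ) (CH : ℕ → W → ℕ) : Prop :=
  IsCR G CG ∧ IsCR H CH ∧
  ∀ t v w, CG (t + 1) v = CH (t + 1) w ↔
    (CG t v = CH t w ∧ nbrColors G (CG t) v = nbrColors H (CH t) w)

/-! ### Auxiliary definitions: the circulant graph `C_12(1,2)` and the two colorings. -/

/-- The circulant graph on `ℤ/12` with connection set `{±1, ±2}`. -/
def G12 : SimpleGraph (ZMod 12) where
  Adj v w := v - w = 1 ∨ v - w = 2 ∨ v - w = 10 ∨ v - w = 11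
  symm := by constructor; intro v w; revert v w; decide
  loopless := by constructor; intro v; revert v; decide

instance : DecidableRel G12.Adj := fun v w => by
  show Decidable (v - w = 1 ∨ _); infer_instance

/-- Coloring A: red (`0`) on `{0,1,2,6,7,8}`. -/
def lA (v : ZMod 12) : ℕ := if v ∈ ({0,1,2,6,7,8} : Finset (ZMod 12)) then 0 else 1

/-- Coloring B: red (`0`) on the odd residues. -/
def lB (v : ZMod 12) : ℕ := if v.val % 2 = 1 then 0 else 1

/-- Translation automorphism of the circulant graph. -/
def shiftIso (c : ZMod 12) : G12 ≃g G12 where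
  toEquiv := Equiv.addRight c
  map_rel_iff' := by
    intro x y
    show G12.Adj (x + c) (y + c) ↔ G12.Adj x y
    simp [G12, add_sub_add_right_eq_sub]

lemma map_ite {α : Type*} (p : α → Prop) [DecidablePred p] (r b : ℕ) (c : α → ℕ)
    (s : Multiset α) (h : ∀ x ∈ s, c x = if p x then r else b) :
    s.map c = Multiset.replicate (Multiset.card (s.filter p)) r +
              Multiset.replicate (Multiset.card (s.filter (fun x => ¬ p x))) b := by
  induction s using Multiset.induction with
  | empty => simp
  | cons a s ih =>
    have ha := h a (Multiset.mem_cons_self a s)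
    have ih' := ih (fun x hx => h x (Multiset.mem_cons_of_mem hx))
    by_cases hp : p a <;>
      simp [Multiset.filter_cons, hp, ha, ih', Multiset.replicate_succ, Multiset.add_cons,
        Multiset.cons_add]

lemma nbrColors_eq {V : Type*} [Fintype V] (G : SimpleGraph V) [DecidableRel G.Adj]
    (c : V → ℕ) (v : V) :
    nbrColors G c v = ((Finset.univ.filter (G.Adj v)).val).map c := by
  unfold nbrColors
  rw [SimpleGraph.neighborFinset_eq_filter]
  congr 1
  exact @Multiset.filter_congr _ _ _ (fun w => Classical.decRel G.Adj v w)
    (fun w => ‹DecidableRel G.Adj› v w) _ (fun x _ => Iff.rfl)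

lemma lA01 : ∀ x : ZMod 12, lA x = 0 ∨ lA x = 1 := by decide
lemma lB01 : ∀ x : ZMod 12, lB x = 0 ∨ lB x = 1 := by decide

lemma cNA0 : ∀ v : ZMod 12, Multiset.card
    (((Finset.univ.filter (G12.Adj v)).val).filter (fun x => lA x = 0)) = 2 := by decide
lemma cNA1 : ∀ v : ZMod 12, Multiset.card
    (((Finset.univ.filter (G12.Adj v)).val).filter (fun x => ¬ lA x = 0)) = 2 := by decide
lemma cNB0 : ∀ v : ZMod 12, Multiset.card
    (((Finset.univ.filter (G12.Adj v)).val).filter (fun x => lB x = 0)) = 2 := by decide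
lemma cNB1 : ∀ v : ZMod 12, Multiset.card
    (((Finset.univ.filter (G12.Adj v)).val).filter (fun x => ¬ lB x = 0)) = 2 := by decide

lemma cUA0 : Multiset.card ((Finset.univ.val : Multiset (ZMod 12)).filter
    (fun x => lA x = 0)) = 6 := by decide
lemma cUA1 : Multiset.card ((Finset.univ.val : Multiset (ZMod 12)).filter
    (fun x => ¬ lA x = 0)) = 6 := by decide
lemma cUB0 : Multiset.card ((Finset.univ.val : Multiset (ZMod 12)).filter
    (fun x => lB x = 0)) = 6 := by decide
lemma cUB1 : Multiset.card ((Finset.univ.val : Multiset (ZMod 12)).filter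
    (fun x => ¬ lB x = 0)) = 6 := by decide

lemma noRedTriangleB : ∀ x y z : ZMod 12, lB x = 0 → lB y = 0 → lB z = 0 →
    G12.Adj x y → G12.Adj y z → G12.Adj x z → False := by decide

/-- Theorem 2 of the paper: for any orbit-invariant vertex labeling `f` of finite graphs,
there exist non-isomorphic vertex-colored graphs `A`, `B` such that after augmenting each
node color `ℓ v` to the pair `(ℓ v, f G v)` (via an injective RELABEL), the two colored
graphs are still not distinguished by 1-WL color refinement. -/
theorem orbit_invariant_PSE_not_downstream_universal (D : Type*)
    (f : ∀ (V : Type) [Fintype V], SimpleGraph V → V → D)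
    (hf : ∀ (V : Type) [Fintype V] (G : SimpleGraph V) (v w : V),
      (∃ φ : G ≃g G, φ v = w) → f V G v = f V G w) :
    ∃ (A B : SimpleGraph (ZMod 12)) (ℓA ℓB : ZMod 12 → ℕ),
      (¬ ∃ φ : A ≃g B, ∀ v : ZMod 12, ℓB (φ v) = ℓA v) ∧
      ∀ (CA CB : ℕ → ZMod 12 → ℕ),
        (∀ v w, CA 0 v = CA 0 w ↔ (ℓA v = ℓA w ∧ f (ZMod 12) A v = f (ZMod 12) A w)) →
        (∀ v w, CB 0 v = CB 0 w ↔ (ℓB v = ℓB w ∧ f (ZMod 12) B v = f (ZMod 12) B w)) →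
        (∀ v w, CA 0 v = CB 0 w ↔ (ℓA v = ℓB w ∧ f (ZMod 12) A v = f (ZMod 12) B w)) →
        IsParallelCR A B CA CB →
        ∀ t : ℕ, (Finset.univ.val.map (CA t)) = (Finset.univ.val.map (CB t)) := by
  refine ⟨G12, G12, lA, lB, ?_, ?_⟩
  · rintro ⟨φ, hφ⟩
    have hmap : ∀ x y : ZMod 12, G12.Adj x y → G12.Adj (φ x) (φ y) :=
      fun x y h => φ.map_rel_iff.mpr h
    have h0 : lB (φ 0) = 0 := by rw [hφ 0]; decide
    have h1 : lB (φ 1) = 0 := by rw [hφ 1]; decide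
    have h2 : lB (φ 2) = 0 := by rw [hφ 2]; decide
    exact noRedTriangleB (φ 0) (φ 1) (φ 2) h0 h1 h2
      (hmap 0 1 (by decide)) (hmap 1 2 (by decide)) (hmap 0 2 (by decide))
  · rintro CA CB h0A h0B h0AB ⟨hCRA, hCRB, hCRAB⟩
    have hfc : ∀ v w : ZMod 12, f (ZMod 12) G12 v = f (ZMod 12) G12 w := fun v w =>
      hf _ G12 v w ⟨shiftIso (w - v), by simp [shiftIso, Equiv.addRight]⟩
    -- pointwise form of a coloring that refines `lA` (resp. `lB`)
    have mkA : ∀ (c : ZMod 12 → ℕ), (∀ v w, c v = c w ↔ lA v = lA w) →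
        ∀ x, c x = if lA x = 0 then c 1 else c 4 := by
      intro c hc x
      rcases lA01 x with hx | hx
      · rw [hx]; simp only [if_pos rfl]
        exact (hc x 1).2 (by rw [hx]; decide)
      · rw [hx]; simp only [if_neg one_ne_zero]
        exact (hc x 4).2 (by rw [hx]; decide)
    have mkB : ∀ (c : ZMod 12 → ℕ), (∀ v w, c v = c w ↔ lB v = lB w) →
        ∀ x, c x = if lB x = 0 then c 1 else c 0 := by
      intro c hc x
      rcases lB01 x with hx | hx
      · rw [hx]; simp only [if_pos rfl]
        exact (hc x 1).2 (by rw [hx]; decide)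
      · rw [hx]; simp only [if_neg one_ne_zero]
        exact (hc x 0).2 (by rw [hx]; decide)
    -- the invariant
    have inv : ∀ t, (∀ v w, CA t v = CA t w ↔ lA v = lA w) ∧
        (∀ v w, CB t v = CB t w ↔ lB v = lB w) ∧
        (∀ v w, CA t v = CB t w ↔ lA v = lB w) := by
      intro t
      induction t with
      | zero =>
        refine ⟨fun v w => ?_, fun v w => ?_, fun v w => ?_⟩
        · rw [h0A v w]; exact ⟨fun h => h.1, fun h => ⟨h, hfc v w⟩⟩
        · rw [h0B v w]; exact ⟨fun h => h.1, fun h => ⟨h, hfc v w⟩⟩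
        · rw [h0AB v w]; exact ⟨fun h => h.1, fun h => ⟨h, hfc v w⟩⟩
      | succ t ih =>
        obtain ⟨iA, iB, iAB⟩ := ih
        have hnA : ∀ v, nbrColors G12 (CA t) v =
            Multiset.replicate 2 (CA t 1) + Multiset.replicate 2 (CA t 4) := by
          intro v
          rw [nbrColors_eq,
            map_ite (fun x => lA x = 0) (CA t 1) (CA t 4) _ _
              (fun x _ => mkA (CA t) iA x), cNA0 v, cNA1 v]
        have hnB : ∀ v, nbrColors G12 (CB t) v =
            Multiset.replicate 2 (CB t 1) + Multiset.replicate 2 (CB t 0) := by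
          intro v
          rw [nbrColors_eq,
            map_ite (fun x => lB x = 0) (CB t 1) (CB t 0) _ _
              (fun x _ => mkB (CB t) iB x), cNB0 v, cNB1 v]
        have e1 : CA t 1 = CB t 1 := (iAB 1 1).2 (by decide)
        have e2 : CA t 4 = CB t 0 := (iAB 4 0).2 (by decide)
        refine ⟨fun v w => ?_, fun v w => ?_, fun v w => ?_⟩
        · rw [hCRA t v w]
          exact ⟨fun h => (iA v w).1 h.1,
            fun h => ⟨(iA v w).2 h, by rw [hnA v, hnA w]⟩⟩
        · rw [hCRB t v w]
          exact ⟨fun h => (iB v w).1 h.1,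
            fun h => ⟨(iB v w).2 h, by rw [hnB v, hnB w]⟩⟩
        · rw [hCRAB t v w]
          exact ⟨fun h => (iAB v w).1 h.1,
            fun h => ⟨(iAB v w).2 h, by rw [hnA v, hnB w, e1, e2]⟩⟩
    intro t
    obtain ⟨iA, iB, iAB⟩ := inv t
    have e1 : CA t 1 = CB t 1 := (iAB 1 1).2 (by decide)
    have e2 : CA t 4 = CB t 0 := (iAB 4 0).2 (by decide)
    rw [map_ite (fun x => lA x = 0) (CA t 1) (CA t 4) _ _
        (fun x _ => mkA (CA t) iA x),
      map_ite (fun x => lB x = 0) (CB t 1) (CB t 0) _ _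
        (fun x _ => mkB (CB t) iB x), cUA0, cUA1, cUB0, cUB1, e1, e2]
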